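/- For every t ∈ ℝ, the characteristic function of the Laplace distribution satisfies (1 + t²)^{-1} = exp( ∫_{ℝ∖{0}} (cos(tx) − 1) · e^{-|x|}/|x| dx ); moreover ∫_ℝ e^{itx} · (1/2) e^{-|x|} dx = (1 + t²)^{-1}. -/

import Mathlib

open MeasureTheory
open Real Set Filter

lemma cosint (t : ℝ) : ∫ x in Ioi (0:ℝ), Real.exp (-x) * Real.cos (t*x) = (1+t^2)⁻¹ := by
  have hden : (0:ℝ) < 1 + t^2 := by positivity
  set F : ℝ → ℝ := fun x => Real.exp (-x) * (t * Real.sin (t*x) - Real.cos (t*x)) / (1+t^2) with hF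
  have hderiv : ∀ x ∈ Ici (0:ℝ), HasDerivAt F (Real.exp (-x) * Real.cos (t*x)) x := by
    intro x _
    have h1 : HasDerivAt (fun x : ℝ => Real.exp (-x)) (-Real.exp (-x)) x := by
      simpa using ((hasDerivAt_id x).neg.exp)
    have h2 : HasDerivAt (fun x : ℝ => t * Real.sin (t*x) - Real.cos (t*x))
        (t^2 * Real.cos (t*x) + t * Real.sin (t*x)) x := by
      have hs : HasDerivAt (fun x : ℝ => Real.sin (t*x)) (Real.cos (t*x) * t) x := by
        simpa [Function.comp_def] using (Real.hasDerivAt_sin (t*x)).comp x ((hasDerivAt_id x).const_mul t)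
      have hc : HasDerivAt (fun x : ℝ => Real.cos (t*x)) (-Real.sin (t*x) * t) x := by
        simpa [Function.comp_def] using (Real.hasDerivAt_cos (t*x)).comp x ((hasDerivAt_id x).const_mul t)
      have := ((hs.const_mul t).sub hc)
      exact this.congr_deriv (by ring)
    have := (h1.mul h2).div_const (1+t^2)
    exact this.congr_deriv (by field_simp; ring)
  have hint : IntegrableOn (fun x => Real.exp (-x) * Real.cos (t*x)) (Ioi (0:ℝ)) := by
    have hexp : IntegrableOn (fun x : ℝ => Real.exp (-(1:ℝ)*x)) (Ioi (0:ℝ)) :=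
      exp_neg_integrableOn_Ioi 0 one_pos
    refine Integrable.mono' (by simpa [IntegrableOn] using hexp) ?_ ?_
    · exact (Continuous.mul (by continuity) (by continuity)).aestronglyMeasurable
    · filter_upwards with x
      rw [norm_mul, Real.norm_eq_abs, Real.norm_eq_abs, abs_of_pos (Real.exp_pos _)]
      calc Real.exp (-x) * |Real.cos (t*x)| ≤ Real.exp (-x) * 1 :=
        mul_le_mul_of_nonneg_left (Real.abs_cos_le_one _) (Real.exp_pos _).le
      _ = Real.exp (-x) := mul_one _
  have htend : Tendsto F atTop (nhds 0) := by
    apply squeeze_zero_norm (a := fun x => Real.exp (-x) * ((|t|+1)/(1+t^2)))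
    · intro x
      rw [hF]
      rw [norm_div, norm_mul, Real.norm_eq_abs, Real.norm_eq_abs, Real.norm_eq_abs,
        abs_of_pos (Real.exp_pos _), abs_of_pos hden, div_le_iff₀ hden]
      have hc : (|t|+1)/(1+t^2) * (1+t^2) = |t|+1 := by field_simp
      rw [mul_assoc, hc]
      apply mul_le_mul_of_nonneg_left _ (Real.exp_pos _).le
      calc |t * Real.sin (t*x) - Real.cos (t*x)| ≤ |t * Real.sin (t*x)| + |Real.cos (t*x)| :=
            abs_sub _ _
        _ ≤ |t| * 1 + 1 := by
            rw [abs_mul]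
            exact add_le_add (mul_le_mul_of_nonneg_left (Real.abs_sin_le_one _) (abs_nonneg t))
              (Real.abs_cos_le_one _)
        _ = |t| + 1 := by ring
    · have := Real.tendsto_exp_neg_atTop_nhds_zero
      simpa using this.mul_const ((|t|+1)/(1+t^2))
  have := integral_Ioi_of_hasDerivAt_of_tendsto' hderiv hint htend
  rw [this, hF]
  simp
  field_simp

lemma sinint (t : ℝ) : ∫ x in Ioi (0:ℝ), Real.sin (t*x) * Real.exp (-x) = t/(1+t^2) := by
  have hden : (0:ℝ) < 1 + t^2 := by positivity
  set F : ℝ → ℝ := fun x => -(Real.exp (-x) * (t * Real.cos (t*x) + Real.sin (t*x)) / (1+t^2)) with hF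
  have hderiv : ∀ x ∈ Ici (0:ℝ), HasDerivAt F (Real.sin (t*x) * Real.exp (-x)) x := by
    intro x _
    have h1 : HasDerivAt (fun x : ℝ => Real.exp (-x)) (-Real.exp (-x)) x := by
      simpa using ((hasDerivAt_id x).neg.exp)
    have h2 : HasDerivAt (fun x : ℝ => t * Real.cos (t*x) + Real.sin (t*x))
        (-(t^2) * Real.sin (t*x) + t * Real.cos (t*x)) x := by
      have hs : HasDerivAt (fun x : ℝ => Real.sin (t*x)) (Real.cos (t*x) * t) x := by
        simpa [Function.comp_def] using (Real.hasDerivAt_sin (t*x)).comp x ((hasDerivAt_id x).const_mul t)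
      have hc : HasDerivAt (fun x : ℝ => Real.cos (t*x)) (-Real.sin (t*x) * t) x := by
        simpa [Function.comp_def] using (Real.hasDerivAt_cos (t*x)).comp x ((hasDerivAt_id x).const_mul t)
      have := ((hc.const_mul t).add hs)
      exact this.congr_deriv (by ring)
    have := ((h1.mul h2).div_const (1+t^2)).neg
    exact this.congr_deriv (by field_simp; ring)
  have hint : IntegrableOn (fun x => Real.sin (t*x) * Real.exp (-x)) (Ioi (0:ℝ)) := by
    have hexp : IntegrableOn (fun x : ℝ => Real.exp (-(1:ℝ)*x)) (Ioi (0:ℝ)) :=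
      exp_neg_integrableOn_Ioi 0 one_pos
    refine Integrable.mono' (by simpa [IntegrableOn] using hexp) ?_ ?_
    · exact (Continuous.mul (by continuity) (by continuity)).aestronglyMeasurable
    · filter_upwards with x
      rw [norm_mul, Real.norm_eq_abs, Real.norm_eq_abs, abs_of_pos (Real.exp_pos _)]
      calc |Real.sin (t*x)| * Real.exp (-x) ≤ 1 * Real.exp (-x) :=
        mul_le_mul_of_nonneg_right (Real.abs_sin_le_one _) (Real.exp_pos _).le
      _ = Real.exp (-x) := one_mul _
  have htend : Tendsto F atTop (nhds 0) := by
    apply squeeze_zero_norm (a := fun x => Real.exp (-x) * ((|t|+1)/(1+t^2)))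
    · intro x
      rw [hF]
      rw [norm_neg, norm_div, norm_mul, Real.norm_eq_abs, Real.norm_eq_abs, Real.norm_eq_abs,
        abs_of_pos (Real.exp_pos _), abs_of_pos hden, div_le_iff₀ hden]
      have hc : (|t|+1)/(1+t^2) * (1+t^2) = |t|+1 := by field_simp
      rw [mul_assoc, hc]
      apply mul_le_mul_of_nonneg_left _ (Real.exp_pos _).le
      calc |t * Real.cos (t*x) + Real.sin (t*x)| ≤ |t * Real.cos (t*x)| + |Real.sin (t*x)| :=
            abs_add_le _ _
        _ ≤ |t| * 1 + 1 := by
            rw [abs_mul]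
            exact add_le_add (mul_le_mul_of_nonneg_left (Real.abs_cos_le_one _) (abs_nonneg t))
              (Real.abs_sin_le_one _)
        _ = |t| + 1 := by ring
    · have := Real.tendsto_exp_neg_atTop_nhds_zero
      simpa using this.mul_const ((|t|+1)/(1+t^2))
  have := integral_Ioi_of_hasDerivAt_of_tendsto' hderiv hint htend
  rw [this, hF]
  simp


lemma expabs_int : Integrable (fun x : ℝ => Real.exp (-|x|)) := by
  have h1 : IntegrableOn (fun x : ℝ => Real.exp (-|x|)) (Ioi 0) := by
    refine ((exp_neg_integrableOn_Ioi 0 one_pos).congr_fun (fun x hx => ?_) measurableSet_Ioi)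
    rw [abs_of_pos hx]; ring_nf
  have h1' : IntegrableOn (fun x : ℝ => Real.exp (-|x|)) (Ici 0) :=
    Iff.mpr integrableOn_Ici_iff_integrableOn_Ioi h1
  have h2 : IntegrableOn (fun x : ℝ => Real.exp (-|x|)) (Iic 0) := by
    rw [show (Iic (0:ℝ)) = (fun x : ℝ => -x) ⁻¹' (Ici 0) by simp [neg_preimage]]
    have m : MeasurableEmbedding (fun x : ℝ => -x) := (Homeomorph.neg ℝ).measurableEmbedding
    rw [← Measure.map_neg_eq_self (volume : Measure ℝ)] at h1'
    have := (m.integrableOn_map_iff (f := fun x : ℝ => Real.exp (-|x|)) (s := Ici 0)).mp h1'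
    simpa [Function.comp_def, abs_neg] using this
  have := h2.union h1
  rwa [Iic_union_Ioi, integrableOn_univ] at this

lemma log_integral (t : ℝ) (ht : 0 ≤ t) :
    ∫ s in Ioc (0:ℝ) t, s/(1+s^2) = (1/2) * Real.log (1+t^2) := by
  rw [← intervalIntegral.integral_of_le ht]
  have : ∀ s ∈ uIcc (0:ℝ) t, HasDerivAt (fun s : ℝ => (1/2) * Real.log (1+s^2)) (s/(1+s^2)) s := by
    intro s _
    have h : HasDerivAt (fun s : ℝ => 1 + s^2) (2*s) s := by
      simpa using ((hasDerivAt_pow 2 s).const_add 1)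
    have hpos : (0:ℝ) < 1 + s^2 := by positivity
    have := (h.log hpos.ne').const_mul (1/2:ℝ)
    exact this.congr_deriv (by field_simp)
  rw [intervalIntegral.integral_eq_sub_of_hasDerivAt this]
  · simp
  · apply ContinuousOn.intervalIntegrable
    apply ContinuousOn.div continuousOn_id (by fun_prop)
    intro s _; positivity

lemma key (t : ℝ) (ht : 0 ≤ t) :
    ∫ x in Ioi (0:ℝ), (Real.cos (t*x) - 1) * Real.exp (-x) / x
      = -((1/2) * Real.log (1+t^2)) := by
  have h1 : ∀ x ∈ Ioi (0:ℝ), (Real.cos (t*x) - 1) * Real.exp (-x) / x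
      = -∫ s in Ioc (0:ℝ) t, Real.sin (s*x) * Real.exp (-x) := by
    intro x hx
    have hx0 : (0:ℝ) < x := hx
    have hs : ∫ s in Ioc (0:ℝ) t, Real.sin (s*x) = (1 - Real.cos (t*x))/x := by
      rw [← intervalIntegral.integral_of_le ht]
      have hd : ∀ s ∈ uIcc (0:ℝ) t, HasDerivAt (fun s : ℝ => -(Real.cos (s*x))/x)
          (Real.sin (s*x)) s := by
        intro s _
        have hc : HasDerivAt (fun s : ℝ => Real.cos (s*x)) (-Real.sin (s*x) * x) s := by
          simpa [Function.comp_def] using (Real.hasDerivAt_cos (s*x)).comp s ((hasDerivAt_id s).mul_const x)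
        have := (hc.neg.div_const x)
        exact this.congr_deriv (by field_simp)
      rw [intervalIntegral.integral_eq_sub_of_hasDerivAt hd]
      · simp [neg_div, ← add_div, sub_div]; ring
      · apply (Continuous.continuousOn (by continuity)).intervalIntegrable
    rw [MeasureTheory.integral_mul_const, hs]
    field_simp
    ring
  rw [setIntegral_congr_fun measurableSet_Ioi h1, integral_neg]
  have hswap : ∫ x in Ioi (0:ℝ), ∫ s in Ioc (0:ℝ) t, Real.sin (s*x) * Real.exp (-x)
      = ∫ s in Ioc (0:ℝ) t, ∫ x in Ioi (0:ℝ), Real.sin (s*x) * Real.exp (-x) := by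
    apply MeasureTheory.integral_integral_swap
    have hmeas : AEStronglyMeasurable (Function.uncurry fun x s => Real.sin (s*x) * Real.exp (-x))
        ((volume.restrict (Ioi (0:ℝ))).prod (volume.restrict (Ioc (0:ℝ) t))) := by
      apply Continuous.aestronglyMeasurable
      apply Continuous.mul
      · exact Real.continuous_sin.comp (continuous_snd.mul continuous_fst)
      · exact Real.continuous_exp.comp continuous_fst.neg
    refine Integrable.mono' (g := fun p : ℝ × ℝ => Real.exp (-p.1) * 1) ?_ hmeas ?_
    · exact Integrable.mul_prod (f := fun x : ℝ => Real.exp (-x)) (g := fun _ : ℝ => (1:ℝ))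
        (by simpa [IntegrableOn] using (exp_neg_integrableOn_Ioi 0 one_pos)) (integrable_const 1)
    · filter_upwards with p
      rw [Function.uncurry]
      simp only [norm_mul, Real.norm_eq_abs, abs_of_pos (Real.exp_pos _), mul_one]
      calc |Real.sin (p.2*p.1)| * Real.exp (-p.1) ≤ 1 * Real.exp (-p.1) :=
        mul_le_mul_of_nonneg_right (Real.abs_sin_le_one _) (Real.exp_pos _).le
      _ = Real.exp (-p.1) := one_mul _
  rw [hswap]
  have : ∀ s ∈ Ioc (0:ℝ) t, (∫ x in Ioi (0:ℝ), Real.sin (s*x) * Real.exp (-x)) = s/(1+s^2) :=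
    fun s _ => sinint s
  rw [setIntegral_congr_fun measurableSet_Ioc this, log_integral t ht]


theorem stmt2 (t : ℝ) :
    (1 + t ^ 2)⁻¹ =
      Real.exp (∫ x in {(0 : ℝ)}ᶜ, (Real.cos (t * x) - 1) * Real.exp (-|x|) / |x|) ∧
    ∫ x : ℝ, Complex.exp (t * x * Complex.I) * ((1 / 2 : ℝ) * Real.exp (-|x|) : ℝ) =
      ((1 + t ^ 2)⁻¹ : ℝ) := by
  have hpos : (0:ℝ) < 1 + t^2 := by positivity
  constructor
  · -- part 1
    rw [MeasureTheory.restrict_compl_singleton]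
    have heq : ∀ x : ℝ, (Real.cos (t*x) - 1) * Real.exp (-|x|) / |x|
        = (Real.cos (|t| * |x|) - 1) * Real.exp (-|x|) / |x| := by
      intro x
      rw [← abs_mul, Real.cos_abs]
    simp only [heq]
    rw [integral_comp_abs (f := fun y : ℝ => (Real.cos (|t| * y) - 1) * Real.exp (-y) / y),
      key |t| (abs_nonneg t)]
    rw [show (1 + |t|^2) = 1 + t^2 by rw [sq_abs]]
    rw [show (2 : ℝ) * -(1/2 * Real.log (1+t^2)) = -Real.log (1+t^2) by ring]
    rw [Real.exp_neg, Real.exp_log hpos]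
  · -- part 2
    have hg : Integrable (fun x : ℝ => (1/2) * Real.exp (-|x|)) := expabs_int.const_mul _
    have hA : Integrable (fun x : ℝ => Real.cos (t*x) * ((1/2) * Real.exp (-|x|))) := by
      refine hg.mono' ?_ ?_
      · exact (Continuous.mul (by continuity) (by continuity)).aestronglyMeasurable
      · filter_upwards with x
        rw [norm_mul, Real.norm_eq_abs, Real.norm_eq_abs, abs_of_pos (by positivity :
          (0:ℝ) < (1/2) * Real.exp (-|x|))]
        nlinarith [Real.abs_cos_le_one (t*x), Real.exp_pos (-|x|), abs_nonneg (Real.cos (t*x))]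
    have hB : Integrable (fun x : ℝ => Real.sin (t*x) * ((1/2) * Real.exp (-|x|))) := by
      refine hg.mono' ?_ ?_
      · exact (Continuous.mul (by continuity) (by continuity)).aestronglyMeasurable
      · filter_upwards with x
        rw [norm_mul, Real.norm_eq_abs, Real.norm_eq_abs, abs_of_pos (by positivity :
          (0:ℝ) < (1/2) * Real.exp (-|x|))]
        nlinarith [Real.abs_sin_le_one (t*x), Real.exp_pos (-|x|), abs_nonneg (Real.sin (t*x))]
    have hsplit : ∀ x : ℝ, Complex.exp (t * x * Complex.I) * ((1 / 2 : ℝ) * Real.exp (-|x|) : ℝ)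
        = ((Real.cos (t*x) * ((1/2) * Real.exp (-|x|)) : ℝ) : ℂ)
          + (Real.sin (t*x) * ((1/2) * Real.exp (-|x|)) : ℝ) • Complex.I := by
      intro x
      rw [show ((t:ℂ) * x * Complex.I) = ((t*x : ℝ) : ℂ) * Complex.I by push_cast; ring,
        Complex.exp_mul_I, ← Complex.ofReal_cos, ← Complex.ofReal_sin]
      push_cast
      simp [Complex.real_smul]
      ring
    simp only [hsplit]
    rw [integral_add (f := fun x : ℝ => ((Real.cos (t*x) * ((1/2) * Real.exp (-|x|)) : ℝ) : ℂ))
      (g := fun x : ℝ => (Real.sin (t*x) * ((1/2) * Real.exp (-|x|)) : ℝ) • Complex.I)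
      (hA.ofReal) (hB.smul_const Complex.I)]
    rw [integral_smul_const,
      show (∫ x : ℝ, ((Real.cos (t*x) * ((1/2) * Real.exp (-|x|)) : ℝ) : ℂ))
        = ((∫ x : ℝ, Real.cos (t*x) * ((1/2) * Real.exp (-|x|)) : ℝ) : ℂ) from integral_ofReal]
    have hAval : ∫ x : ℝ, Real.cos (t*x) * ((1/2) * Real.exp (-|x|)) = (1+t^2)⁻¹ := by
      have hcos : ∀ x : ℝ, Real.cos (t * |x|) = Real.cos (t*x) := by
        intro x
        rcases abs_choice x with h|h
        · rw [h]
        · rw [h, mul_neg, Real.cos_neg]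
      have : (fun x : ℝ => Real.cos (t*x) * ((1/2) * Real.exp (-|x|)))
          = fun x : ℝ => (1/2) * ((fun y : ℝ => Real.exp (-y) * Real.cos (t*y)) |x|) := by
        funext x
        simp only [← hcos x]
        ring
      rw [this, integral_const_mul,
        integral_comp_abs (f := fun y : ℝ => Real.exp (-y) * Real.cos (t*y)), cosint]
      ring
    have hBval : ∫ x : ℝ, Real.sin (t*x) * ((1/2) * Real.exp (-|x|)) = 0 := by
      have hodd : ∀ x : ℝ, Real.sin (t*(-x)) * ((1/2) * Real.exp (-|(-x)|))
          = -(Real.sin (t*x) * ((1/2) * Real.exp (-|x|))) := by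
        intro x
        rw [abs_neg, show t * -x = -(t*x) by ring, Real.sin_neg]
        ring
      have h1 : ∫ x : ℝ, Real.sin (t*x) * ((1/2) * Real.exp (-|x|))
          = ∫ x : ℝ, Real.sin (t*(-x)) * ((1/2) * Real.exp (-|(-x)|)) :=
        (integral_neg_eq_self _ _).symm
      rw [integral_congr_ae (Eventually.of_forall hodd), integral_neg] at h1
      linarith
    rw [hAval, hBval]
    simp
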